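/- The operator A_{N,X} is symmetric and positive definite with respect to the Frobenius inner product on d×d matrices, for any invertible X. -/
import Mathlib


open Matrix Real

/-- The operator `A_{N,X}(P) = Σ_{p=1}^N (XXᵀ)^{(N-p)/N} P (XᵀX)^{(p-1)/N}` for
`X = Q_N Σ Q_0ᵀ`, with fractional powers defined spectrally:
`(XXᵀ)^s = Q_N Σ^{2s} Q_Nᵀ` and `(XᵀX)^s = Q_0 Σ^{2s} Q_0ᵀ`. -/
lemma trace_quad (d : ℕ) (D E : Fin d → ℝ) (M : Matrix (Fin d) (Fin d) ℝ) :
    Matrix.trace (Mᵀ * (Matrix.diagonal D * M * Matrix.diagonal E)) =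
      ∑ i, ∑ j, D j * E i * (M j i)^2 := by
  simp [Matrix.trace, Matrix.mul_apply, Matrix.diag, Matrix.diagonal_apply,
    Finset.mul_sum, Finset.sum_mul]
  apply Finset.sum_congr rfl; intro i _
  apply Finset.sum_congr rfl; intro j _
  ring

noncomputable def dlnA (d N : ℕ) (QN Q0 : Matrix (Fin d) (Fin d) ℝ) (σ : Fin d → ℝ)
    (P : Matrix (Fin d) (Fin d) ℝ) : Matrix (Fin d) (Fin d) ℝ :=
  ∑ p ∈ Finset.range N,
    (QN * Matrix.diagonal (fun i => (σ i) ^ ((2 * ((N : ℝ) - ((p : ℝ) + 1))) / N)) * QNᵀ) *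
      P *
    (Q0 * Matrix.diagonal (fun i => (σ i) ^ ((2 * (p : ℝ)) / N)) * Q0ᵀ)

/-- `A_{N,X}` is symmetric and positive definite with respect to the Frobenius inner
product `⟨A,B⟩ = Tr(AᵀB)`, for any invertible `X = Q_N Σ Q_0ᵀ`. -/
theorem dlnA_symm_posdef (d N : ℕ) (hd : 0 < d) (hN : 0 < N)
    (QN Q0 : Matrix (Fin d) (Fin d) ℝ) (hQN : QNᵀ * QN = 1) (hQ0 : Q0ᵀ * Q0 = 1)
    (σ : Fin d → ℝ) (hσ : ∀ i, 0 < σ i) :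
    (∀ P R : Matrix (Fin d) (Fin d) ℝ,
        Matrix.trace (Pᵀ * dlnA d N QN Q0 σ R) = Matrix.trace ((dlnA d N QN Q0 σ P)ᵀ * R)) ∧
    (∀ P : Matrix (Fin d) (Fin d) ℝ, P ≠ 0 →
        0 < Matrix.trace (Pᵀ * dlnA d N QN Q0 σ P)) := by
  set Dfun : ℕ → Fin d → ℝ :=
    fun p i => (σ i) ^ ((2 * ((N : ℝ) - ((p : ℝ) + 1))) / N) with hDfun
  set Efun : ℕ → Fin d → ℝ := fun p i => (σ i) ^ ((2 * (p : ℝ)) / N) with hEfun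
  constructor
  · intro P R
    unfold dlnA
    rw [Matrix.mul_sum, Matrix.transpose_sum, Finset.sum_mul,
      Matrix.trace_sum, Matrix.trace_sum]
    apply Finset.sum_congr rfl
    intro p _
    set L := QN * Matrix.diagonal (Dfun p) * QNᵀ with hL
    set E := Q0 * Matrix.diagonal (Efun p) * Q0ᵀ with hE
    have hLs : Lᵀ = L := by
      simp [hL, Matrix.transpose_mul, Matrix.mul_assoc]
    have hEs : Eᵀ = E := by
      simp [hE, Matrix.transpose_mul, Matrix.mul_assoc]
    have : (L * P * E)ᵀ = E * Pᵀ * L := by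
      simp [Matrix.transpose_mul, hLs, hEs, Matrix.mul_assoc]
    rw [this]
    rw [show Pᵀ * (L * R * E) = (Pᵀ * L * R) * E by simp [Matrix.mul_assoc],
      show E * Pᵀ * L * R = E * (Pᵀ * L * R) by simp [Matrix.mul_assoc]]
    exact (Matrix.trace_mul_comm _ _)
  · intro P hP
    set M := QNᵀ * P * Q0 with hM
    have hMne : M ≠ 0 := by
      intro h
      apply hP
      have hQN' : QN * QNᵀ = 1 := mul_eq_one_comm.mp hQN
      have hQ0' : Q0 * Q0ᵀ = 1 := mul_eq_one_comm.mp hQ0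
      have : QN * M * Q0ᵀ = P := by
        rw [hM]
        calc QN * (QNᵀ * P * Q0) * Q0ᵀ = (QN * QNᵀ) * P * (Q0 * Q0ᵀ) := by
              simp [Matrix.mul_assoc]
        _ = P := by rw [hQN', hQ0', Matrix.one_mul, Matrix.mul_one]
      rw [← this, h, Matrix.mul_zero, Matrix.zero_mul]
    obtain ⟨j, i, hji⟩ : ∃ j i, M j i ≠ 0 := by
      by_contra h
      push_neg at h
      exact hMne (by ext j i; exact h j i)
    unfold dlnA
    rw [Matrix.mul_sum, Matrix.trace_sum]
    have key : ∀ p ∈ Finset.range N,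
        Matrix.trace (Pᵀ * ((QN * Matrix.diagonal (Dfun p) * QNᵀ) * P *
          (Q0 * Matrix.diagonal (Efun p) * Q0ᵀ))) =
        ∑ a, ∑ b, Dfun p b * Efun p a * (M b a)^2 := by
      intro p _
      have : Pᵀ * ((QN * Matrix.diagonal (Dfun p) * QNᵀ) * P *
          (Q0 * Matrix.diagonal (Efun p) * Q0ᵀ)) =
          (Pᵀ * QN) * (Matrix.diagonal (Dfun p) * (QNᵀ * P * Q0) * Matrix.diagonal (Efun p)) * Q0ᵀ := by
        simp [Matrix.mul_assoc]
      rw [this, Matrix.trace_mul_cycle,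
        show Q0ᵀ * (Pᵀ * QN) = (QNᵀ * P * Q0)ᵀ by simp [Matrix.transpose_mul, Matrix.mul_assoc],
        ← hM, trace_quad]
    rw [Finset.sum_congr rfl key]
    apply Finset.sum_pos
    · intro p _
      apply Finset.sum_pos'
      · intro a _
        apply Finset.sum_nonneg
        intro b _
        have h1 : 0 < Dfun p b := Real.rpow_pos_of_pos (hσ b) _
        have h2 : 0 < Efun p a := Real.rpow_pos_of_pos (hσ a) _
        positivity
      · refine ⟨i, Finset.mem_univ i, ?_⟩
        apply Finset.sum_pos'
        · intro b _
          have h1 : 0 < Dfun p b := Real.rpow_pos_of_pos (hσ b) _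
          have h2 : 0 < Efun p i := Real.rpow_pos_of_pos (hσ i) _
          positivity
        · refine ⟨j, Finset.mem_univ j, ?_⟩
          have h1 : 0 < Dfun p j := Real.rpow_pos_of_pos (hσ j) _
          have h2 : 0 < Efun p i := Real.rpow_pos_of_pos (hσ i) _
          have h3 : 0 < (M j i)^2 := by positivity
          positivity
    · exact Finset.nonempty_range_iff.mpr hN.ne'
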